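/- Let G = (V,E) be a simple, undirected, locally finite graph and consider an MPNN with scalar features computing h_i^{(ℓ+1)} = φ_ℓ(h_i^{(ℓ)}, Σ_j â_{ij} ψ_ℓ(h_i^{(ℓ)}, h_j^{(ℓ)})) with H^{(0)} = X, where all φ_ℓ and ψ_ℓ are differentiable with gradient norms bounded by α and β respectively. If i, s ∈ V satisfy d_G(i,s) = r+1, then |∂h_i^{(r+1)}/∂x_s| ≤ (αβ)^{r+1} (Â^{r+1})_{is}. -/

import Mathlib

/-- The normalized augmented adjacency matrix `Â = D̃^{-1/2}(A+I)D̃^{-1/2}`,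
where `A` is the adjacency matrix of `G` and `D̃` is the diagonal degree matrix of `A + I`. -/
noncomputable def hatA {V : Type*} [Fintype V] [DecidableEq V]
    (G : SimpleGraph V) [DecidableRel G.Adj] : Matrix V V ℝ := fun i j =>
  (if i = j then 1 else if G.Adj i j then 1 else 0) /
    (Real.sqrt ((G.degree i : ℝ) + 1) * Real.sqrt ((G.degree j : ℝ) + 1))

/-- **Over-squashing Jacobian bound for MPNNs.**
Consider an MPNN with scalar features
`h_i^{(ℓ+1)} = φ_ℓ(h_i^{(ℓ)}, Σ_j â_{ij} ψ_ℓ(h_i^{(ℓ)}, h_j^{(ℓ)}))`, `H^{(0)} = X`,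
where the differentiable maps `φ_ℓ, ψ_ℓ` have gradient norms bounded by `α` and `β`.
If `d_G(i,s) = r + 1`, then `|∂ h_i^{(r+1)} / ∂ x_s| ≤ (αβ)^{r+1} (Â^{r+1})_{is}`. -/
lemma hatA_nonneg {V : Type*} [Fintype V] [DecidableEq V]
    (G : SimpleGraph V) [DecidableRel G.Adj] (i j : V) : 0 ≤ hatA G i j := by
  unfold hatA
  apply div_nonneg
  · split_ifs <;> norm_num
  · positivity

lemma hatA_eq_zero {V : Type*} [Fintype V] [DecidableEq V]
    (G : SimpleGraph V) [DecidableRel G.Adj] {i j : V}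
    (hij : ¬(i = j ∨ G.Adj i j)) : hatA G i j = 0 := by
  push_neg at hij
  unfold hatA
  rw [if_neg hij.1, if_neg hij.2, zero_div]

lemma hatA_pow_nonneg {V : Type*} [Fintype V] [DecidableEq V]
    (G : SimpleGraph V) [DecidableRel G.Adj] (ℓ : ℕ) (i j : V) :
    0 ≤ (hatA G ^ ℓ) i j := by
  induction ℓ generalizing i j with
  | zero =>
    rw [pow_zero]
    by_cases h : i = j
    · subst h; rw [Matrix.one_apply_eq]; norm_num
    · rw [Matrix.one_apply_ne h]
  | succ n ih =>
    rw [pow_succ', Matrix.mul_apply]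
    exact Finset.sum_nonneg fun u _ => mul_nonneg (hatA_nonneg G i u) (ih u j)

lemma hatA_pow_eq_zero {V : Type*} [Fintype V] [DecidableEq V]
    (G : SimpleGraph V) [DecidableRel G.Adj] (s : V) :
    ∀ (ℓ : ℕ) (v : V), (G.Reachable v s → ℓ < G.dist v s) → (hatA G ^ ℓ) v s = 0 := by
  intro ℓ
  induction ℓ with
  | zero =>
    intro v hv
    rw [pow_zero, Matrix.one_apply_ne]
    intro hvs
    subst hvs
    have := hv (SimpleGraph.Reachable.refl v)
    simp [SimpleGraph.dist_self] at this
  | succ n ih =>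
    intro v hv
    rw [pow_succ', Matrix.mul_apply]
    apply Finset.sum_eq_zero
    intro u _
    by_cases hz : v = u ∨ G.Adj v u
    · rw [ih u, mul_zero]
      intro hus
      by_contra hlt
      push_neg at hlt
      rcases hz with rfl | hadj
      · exact absurd (hv hus) (by omega)
      · obtain ⟨p, hp⟩ := hus.exists_walk_length_eq_dist
        have hreach : G.Reachable v s := ⟨SimpleGraph.Walk.cons hadj p⟩
        have hle : G.dist v s ≤ n + 1 := by
          have := SimpleGraph.dist_le (SimpleGraph.Walk.cons hadj p)
          rw [SimpleGraph.Walk.length_cons, hp] at this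
          omega
        exact absurd (hv hreach) (by omega)
    · rw [hatA_eq_zero G hz, zero_mul]

lemma lin_pair_bound (L : (ℝ × ℝ) →L[ℝ] ℝ) {c : ℝ} (t : ℝ) (hc : ‖L‖ ≤ c) :
    |L (0, t)| ≤ c * |t| := by
  calc |L (0, t)| ≤ ‖L‖ * ‖((0:ℝ), t)‖ := L.le_opNorm _
  _ ≤ c * |t| := by
      apply mul_le_mul hc ?_ (norm_nonneg _) ((norm_nonneg _).trans hc)
      simp [Prod.norm_def]

theorem mpnn_jacobian_bound {V : Type*} [Fintype V] [DecidableEq V]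
    (G : SimpleGraph V) [DecidableRel G.Adj]
    (α β : ℝ) (φ ψ : ℕ → ℝ × ℝ → ℝ)
    (hφdiff : ∀ ℓ, Differentiable ℝ (φ ℓ))
    (hφgrad : ∀ ℓ p, ‖fderiv ℝ (φ ℓ) p‖ ≤ α)
    (hψdiff : ∀ ℓ, Differentiable ℝ (ψ ℓ))
    (hψgrad : ∀ ℓ p, ‖fderiv ℝ (ψ ℓ) p‖ ≤ β)
    (h : ℕ → (V → ℝ) → V → ℝ)
    (h0 : ∀ X v, h 0 X v = X v)
    (hrec : ∀ ℓ X v, h (ℓ + 1) X v =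
      φ ℓ (h ℓ X v, ∑ u, hatA G v u * ψ ℓ (h ℓ X v, h ℓ X u)))
    (r : ℕ) (i s : V) (hdist : G.dist i s = r + 1) (X : V → ℝ) :
    |fderiv ℝ (fun Y => h (r + 1) Y i) X (Pi.single s 1)| ≤
      (α * β) ^ (r + 1) * (hatA G ^ (r + 1)) i s := by
  have hα : 0 ≤ α := le_trans (norm_nonneg _) (hφgrad 0 0)
  have hβ : 0 ≤ β := le_trans (norm_nonneg _) (hψgrad 0 0)
  have key : ∀ ℓ : ℕ, (∀ v, Differentiable ℝ (fun Y : V → ℝ => h ℓ Y v)) ∧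
      (∀ (v : V) (X : V → ℝ), ℓ ≤ G.dist v s →
        |fderiv ℝ (fun Y => h ℓ Y v) X (Pi.single s 1)| ≤
          (α * β) ^ ℓ * (hatA G ^ ℓ) v s) := by
    intro ℓ
    induction ℓ with
    | zero =>
      have heq : ∀ v : V, (fun Y : V → ℝ => h 0 Y v) = fun Y => Y v :=
        fun v => funext fun Y => h0 Y v
      constructor
      · intro v
        rw [heq v]
        exact (ContinuousLinearMap.proj (R := ℝ) (φ := fun _ : V => ℝ) v).differentiable
      · intro v X _
        rw [heq v]
        have hfd : HasFDerivAt (fun Y : V → ℝ => Y v)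
            (ContinuousLinearMap.proj (R := ℝ) (φ := fun _ : V => ℝ) v) X :=
          (ContinuousLinearMap.proj (R := ℝ) (φ := fun _ : V => ℝ) v).hasFDerivAt
        rw [hfd.fderiv]
        by_cases hvs : v = s
        · subst hvs
          simp [pow_zero, Matrix.one_apply_eq]
        · simp [pow_zero, Matrix.one_apply_ne hvs, Pi.single_eq_of_ne hvs]
    | succ ℓ ih =>
      obtain ⟨ihd, ihb⟩ := ih
      have heq : ∀ v : V, (fun Y : V → ℝ => h (ℓ + 1) Y v) =
          fun Y => φ ℓ (h ℓ Y v, ∑ u, hatA G v u * ψ ℓ (h ℓ Y v, h ℓ Y u)) :=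
        fun v => funext fun Y => hrec ℓ Y v
      -- derivative structure at any point X, any node v
      have hderiv : ∀ (v : V) (X : V → ℝ),
          HasFDerivAt (fun Y : V → ℝ => h (ℓ + 1) Y v)
            ((fderiv ℝ (φ ℓ) (h ℓ X v, ∑ u, hatA G v u * ψ ℓ (h ℓ X v, h ℓ X u))).comp
              ((fderiv ℝ (fun Y => h ℓ Y v) X).prod
                (∑ u, hatA G v u •
                  ((fderiv ℝ (ψ ℓ) (h ℓ X v, h ℓ X u)).comp
                    ((fderiv ℝ (fun Y => h ℓ Y v) X).prod
                      (fderiv ℝ (fun Y => h ℓ Y u) X)))))) X := by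
        intro v X
        have hDu : ∀ u : V, HasFDerivAt (fun Y : V → ℝ => h ℓ Y u)
            (fderiv ℝ (fun Y => h ℓ Y u) X) X := fun u => (ihd u X).hasFDerivAt
        have hpsi : ∀ u : V, HasFDerivAt (fun Y : V → ℝ => ψ ℓ (h ℓ Y v, h ℓ Y u))
            ((fderiv ℝ (ψ ℓ) (h ℓ X v, h ℓ X u)).comp
              ((fderiv ℝ (fun Y => h ℓ Y v) X).prod (fderiv ℝ (fun Y => h ℓ Y u) X))) X :=
          fun u => (((hψdiff ℓ) _).hasFDerivAt).comp X ((hDu v).prodMk (hDu u))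
        have hsum : HasFDerivAt
            (fun Y : V → ℝ => ∑ u, hatA G v u * ψ ℓ (h ℓ Y v, h ℓ Y u))
            (∑ u, hatA G v u •
              ((fderiv ℝ (ψ ℓ) (h ℓ X v, h ℓ X u)).comp
                ((fderiv ℝ (fun Y => h ℓ Y v) X).prod (fderiv ℝ (fun Y => h ℓ Y u) X)))) X :=
          HasFDerivAt.fun_sum fun u _ => (hpsi u).const_mul (hatA G v u)
        rw [heq v]
        exact (((hφdiff ℓ) _).hasFDerivAt).comp X ((hDu v).prodMk hsum)
      constructor
      · intro v
        exact fun X => (hderiv v X).differentiableAt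
      · intro v X hv
        rw [(hderiv v X).fderiv]
        have hvz : fderiv ℝ (fun Y => h ℓ Y v) X (Pi.single s 1) = 0 := by
          have h1 := ihb v X (by omega)
          have h2 : (hatA G ^ ℓ) v s = 0 := by
            apply hatA_pow_eq_zero
            intro _
            omega
          rw [h2, mul_zero] at h1
          exact abs_eq_zero.mp (le_antisymm h1 (abs_nonneg _))
        simp only [ContinuousLinearMap.comp_apply, ContinuousLinearMap.prod_apply,
          ContinuousLinearMap.sum_apply, ContinuousLinearMap.smul_apply, hvz,
          smul_eq_mul]
        set t : ℝ := ∑ u, hatA G v u *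
          (fderiv ℝ (ψ ℓ) (h ℓ X v, h ℓ X u)) (0, fderiv ℝ (fun Y => h ℓ Y u) X (Pi.single s 1))
          with ht
        have hstep1 : |(fderiv ℝ (φ ℓ) (h ℓ X v, ∑ u, hatA G v u * ψ ℓ (h ℓ X v, h ℓ X u))) (0, t)|
            ≤ α * |t| := lin_pair_bound _ t (hφgrad ℓ _)
        have hstep2 : |t| ≤ ∑ u, hatA G v u * (β * ((α * β) ^ ℓ * (hatA G ^ ℓ) u s)) := by
          refine le_trans (Finset.abs_sum_le_sum_abs _ _) (Finset.sum_le_sum fun u _ => ?_)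
          by_cases hz : v = u ∨ G.Adj v u
          · rw [abs_mul, abs_of_nonneg (hatA_nonneg G v u)]
            apply mul_le_mul_of_nonneg_left _ (hatA_nonneg G v u)
            have hus : ℓ ≤ G.dist u s := by
              rcases hz with rfl | hadj
              · omega
              · have hreach : G.Reachable v s := by
                  apply SimpleGraph.Reachable.of_dist_ne_zero
                  omega
                have hrus : G.Reachable u s := (hadj.reachable.symm).trans hreach
                obtain ⟨p, hp⟩ := hrus.exists_walk_length_eq_dist
                have := SimpleGraph.dist_le (SimpleGraph.Walk.cons hadj p)
                rw [SimpleGraph.Walk.length_cons, hp] at this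
                omega
            calc |(fderiv ℝ (ψ ℓ) (h ℓ X v, h ℓ X u))
                  (0, fderiv ℝ (fun Y => h ℓ Y u) X (Pi.single s 1))|
                ≤ β * |fderiv ℝ (fun Y => h ℓ Y u) X (Pi.single s 1)| :=
                  lin_pair_bound _ _ (hψgrad ℓ _)
              _ ≤ β * ((α * β) ^ ℓ * (hatA G ^ ℓ) u s) :=
                  mul_le_mul_of_nonneg_left (ihb u X hus) hβ
          · simp [hatA_eq_zero G hz]
        have hsum_eq : ∑ u, hatA G v u * (β * ((α * β) ^ ℓ * (hatA G ^ ℓ) u s)) =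
            β * ((α * β) ^ ℓ * (hatA G ^ (ℓ + 1)) v s) := by
          rw [pow_succ' (hatA G) ℓ, Matrix.mul_apply, Finset.mul_sum, Finset.mul_sum]
          exact Finset.sum_congr rfl fun u _ => by ring
        calc |(fderiv ℝ (φ ℓ) (h ℓ X v, ∑ u, hatA G v u * ψ ℓ (h ℓ X v, h ℓ X u))) (0, t)|
            ≤ α * |t| := hstep1
          _ ≤ α * (β * ((α * β) ^ ℓ * (hatA G ^ (ℓ + 1)) v s)) :=
              mul_le_mul_of_nonneg_left (hstep2.trans_eq hsum_eq) hα
          _ = (α * β) ^ (ℓ + 1) * (hatA G ^ (ℓ + 1)) v s := by ring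
  exact (key (r + 1)).2 i X (le_of_eq hdist.symm)
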